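/- arXiv:2109.02761 — 4 statements merged into one kernel-verified Lean document; each statement's English description precedes it below -/
import Mathlib

section
/- The function f : ℝ^d → ℝ^d given by f(z) = z·exp(−‖z‖²/(4ε)) is globally Lipschitz with Lipschitz constant K_f = √(e^{-2}d² + d(1 − e^{-2})). -/
private lemma aux_exp_bound (t : ℝ) (ht : 0 ≤ t) :
    |Real.exp (-t) * (1 - 2 * t)| ≤ 1 := by
  have hprod : Real.exp (-t) * Real.exp t = 1 := by
    rw [← Real.exp_add]; simp
  have hE1 : Real.exp (-t) ≤ 1 := Real.exp_le_one_iff.mpr (by linarith)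
  have hEpos : 0 < Real.exp (-t) := Real.exp_pos _
  have h2 : (1 + t / 2) ^ 2 ≤ Real.exp t := by
    have h := Real.add_one_le_exp (t / 2)
    have hsq : (t / 2 + 1) * (t / 2 + 1) ≤ Real.exp (t / 2) * Real.exp (t / 2) := by
      apply mul_le_mul h h (by linarith) (le_of_lt (Real.exp_pos _))
    rw [← Real.exp_add] at hsq
    calc (1 + t / 2) ^ 2 = (t / 2 + 1) * (t / 2 + 1) := by ring
      _ ≤ Real.exp (t / 2 + t / 2) := hsq
      _ = Real.exp t := by ring_nf
  have h2t : 2 * t - 1 ≤ Real.exp t := by nlinarith [sq_nonneg (t / 2 - 1)]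
  rw [abs_le]
  constructor
  · nlinarith [mul_le_mul_of_nonneg_left h2t (le_of_lt hEpos)]
  · nlinarith [mul_nonneg (le_of_lt hEpos) ht]

private lemma oneD_lipschitz (ε : ℝ) (hε : 0 < ε) (r q : ℝ) :
    |r * Real.exp (-r ^ 2 / (4 * ε)) - q * Real.exp (-q ^ 2 / (4 * ε))| ≤ |r - q| := by
  set g : ℝ → ℝ := fun x => x * Real.exp (-x ^ 2 / (4 * ε)) with hg
  set g' : ℝ → ℝ := fun x => Real.exp (-x ^ 2 / (4 * ε)) * (1 - x ^ 2 / (2 * ε)) with hg'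
  have hderiv : ∀ x ∈ (Set.univ : Set ℝ), HasDerivWithinAt g (g' x) Set.univ x := by
    intro x _
    have h1 : HasDerivAt (fun x : ℝ => -x ^ 2 / (4 * ε)) (-(2 * x) / (4 * ε)) x := by
      have := (hasDerivAt_pow 2 x).neg.div_const (4 * ε)
      simpa using this
    have h2 := h1.exp
    have h3 := (hasDerivAt_id x).mul h2
    have : HasDerivAt g (g' x) x := by
      have h4 : HasDerivAt g _ x := h3
      refine h4.congr_deriv ?_
      simp only [hg', id]
      field_simp
      ring
    exact this.hasDerivWithinAt
  have hbound : ∀ x ∈ (Set.univ : Set ℝ), ‖g' x‖ ≤ 1 := by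
    intro x _
    have ht : 0 ≤ x ^ 2 / (4 * ε) := by positivity
    have := aux_exp_bound (x ^ 2 / (4 * ε)) ht
    simp only [hg', Real.norm_eq_abs]
    have h1 : -x ^ 2 / (4 * ε) = -(x ^ 2 / (4 * ε)) := by ring
    have h2 : 1 - x ^ 2 / (2 * ε) = 1 - 2 * (x ^ 2 / (4 * ε)) := by
      field_simp
      ring
    rw [h1, h2]
    exact this
  have := convex_univ.norm_image_sub_le_of_norm_hasDerivWithin_le hderiv hbound
    (Set.mem_univ q) (Set.mem_univ r)
  simpa [hg, Real.norm_eq_abs] using this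

/-- The function `f(z) = z·exp(-‖z‖²/(4ε))` is globally Lipschitz with constant
`K_f = √(e⁻²d² + d(1 - e⁻²))`. -/
theorem zexp_global_lipschitz (d : ℕ) (hd : 1 ≤ d) (ε : ℝ) (hε : 0 < ε)
    (f : EuclideanSpace ℝ (Fin d) → EuclideanSpace ℝ (Fin d))
    (hf : ∀ z, f z = Real.exp (-‖z‖ ^ 2 / (4 * ε)) • z) :
    ∀ z y, ‖f z - f y‖
      ≤ Real.sqrt (Real.exp (-2) * (d : ℝ) ^ 2 + (d : ℝ) * (1 - Real.exp (-2))) * ‖z - y‖ := by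
  intro z y
  set a : ℝ := Real.exp (-‖z‖ ^ 2 / (4 * ε)) with ha
  set b : ℝ := Real.exp (-‖y‖ ^ 2 / (4 * ε)) with hb
  have hapos : 0 < a := Real.exp_pos _
  have hbpos : 0 < b := Real.exp_pos _
  have ha1 : a ≤ 1 := Real.exp_le_one_iff.mpr
    (div_nonpos_of_nonpos_of_nonneg (neg_nonpos_of_nonneg (sq_nonneg _)) (by positivity))
  have hb1 : b ≤ 1 := Real.exp_le_one_iff.mpr
    (div_nonpos_of_nonpos_of_nonneg (neg_nonpos_of_nonneg (sq_nonneg _)) (by positivity))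
  -- the 1-Lipschitz bound
  have key : ‖f z - f y‖ ≤ ‖z - y‖ := by
    rw [hf z, hf y, ← ha, ← hb]
    have h1d := oneD_lipschitz ε hε ‖z‖ ‖y‖
    have key2 : (‖z‖ * a - ‖y‖ * b) ^ 2 ≤ (‖z‖ - ‖y‖) ^ 2 := by
      have := mul_self_le_mul_self (abs_nonneg _) h1d
      simpa [← sq, sq_abs] using this
    have hc : (inner ℝ z y : ℝ) ≤ ‖z‖ * ‖y‖ := real_inner_le_norm z y
    have h1ab : 0 ≤ 1 - a * b := by nlinarith
    have hsq1 : ‖a • z - b • y‖ ^ 2 =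
        a ^ 2 * ‖z‖ ^ 2 - 2 * (a * b) * (inner ℝ z y : ℝ) + b ^ 2 * ‖y‖ ^ 2 := by
      rw [norm_sub_sq_real (a • z) (b • y)]
      rw [norm_smul, norm_smul, real_inner_smul_left, real_inner_smul_right]
      simp [Real.norm_eq_abs, abs_of_pos hapos, abs_of_pos hbpos]
      ring
    have hsq2 : ‖z - y‖ ^ 2 = ‖z‖ ^ 2 - 2 * (inner ℝ z y : ℝ) + ‖y‖ ^ 2 :=
      norm_sub_sq_real z y
    have hineq : ‖a • z - b • y‖ ^ 2 ≤ ‖z - y‖ ^ 2 := by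
      rw [hsq1, hsq2]
      nlinarith [key2, mul_nonneg h1ab (sub_nonneg.mpr hc)]
    have := Real.sqrt_le_sqrt hineq
    rwa [Real.sqrt_sq (norm_nonneg _), Real.sqrt_sq (norm_nonneg _)] at this
  -- the constant is at least 1
  have hK : 1 ≤ Real.sqrt (Real.exp (-2) * (d : ℝ) ^ 2 + (d : ℝ) * (1 - Real.exp (-2))) := by
    have hd1 : (1 : ℝ) ≤ (d : ℝ) := by exact_mod_cast hd
    have he : 0 < Real.exp (-2) := Real.exp_pos _
    have he1 : Real.exp (-2) ≤ 1 := Real.exp_le_one_iff.mpr (by norm_num)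
    have h1 : (1 : ℝ) ≤ Real.exp (-2) * (d : ℝ) ^ 2 + (d : ℝ) * (1 - Real.exp (-2)) := by
      nlinarith [mul_nonneg (sub_nonneg.mpr hd1)
        (add_nonneg (mul_nonneg he.le (by linarith : (0:ℝ) ≤ (d:ℝ))) zero_le_one)]
    calc (1 : ℝ) = Real.sqrt 1 := Real.sqrt_one.symm
      _ ≤ _ := Real.sqrt_le_sqrt h1
  calc ‖f z - f y‖ ≤ ‖z - y‖ := key
    _ = 1 * ‖z - y‖ := (one_mul _).symm
    _ ≤ Real.sqrt (Real.exp (-2) * (d : ℝ) ^ 2 + (d : ℝ) * (1 - Real.exp (-2))) * ‖z - y‖ :=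
        mul_le_mul_of_nonneg_right hK (norm_nonneg _)
end

section
/- Let T be an N×N row-stochastic matrix with all entries bounded above by (δN)^{-3/2}, where 0 < δ√(δN) < 1. Then for any two probability row-vectors v, w ∈ ℝ^N, ∑_m |(vT)_m − (wT)_m| ≤ ((δ^{3/2}√N)^{-1} − 1)·∑_j |v_j − w_j|. In particular T is a strict contraction in total variation whenever δ^{3/2}√N > 1/2. -/
/-- Total variation contraction for a row-stochastic matrix with entries bounded by
`(δN)^{-3/2}`: for probability vectors `v, w`,
`∑_m |(vT)_m - (wT)_m| ≤ ((δ^{3/2}√N)⁻¹ - 1)·∑_j |v_j - w_j|`,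
where `δ^{3/2}√N = δ√(δN)`. -/
theorem markov_matrix_tv_contraction (N : ℕ) (hN : 1 ≤ N) (δ : ℝ)
    (hδ0 : 0 < δ) (hδ1 : δ < 1) (hδN : δ * Real.sqrt (δ * N) < 1)
    (T : Matrix (Fin N) (Fin N) ℝ)
    (hTpos : ∀ j m, 0 ≤ T j m) (hTrow : ∀ j, ∑ m, T j m = 1)
    (hTbd : ∀ j m, T j m ≤ (δ * N * Real.sqrt (δ * N))⁻¹)
    (v w : Fin N → ℝ)
    (hv : (∀ j, 0 ≤ v j) ∧ ∑ j, v j = 1) (hw : (∀ j, 0 ≤ w j) ∧ ∑ j, w j = 1) :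
    ∑ m, |(∑ j, v j * T j m) - ∑ j, w j * T j m|
      ≤ ((δ * Real.sqrt (δ * N))⁻¹ - 1) * ∑ j, |v j - w j| := by
  obtain ⟨hv0, hv1⟩ := hv
  obtain ⟨hw0, hw1⟩ := hw
  have hNpos : (0:ℝ) < N := by exact_mod_cast hN
  have hsq : 0 < Real.sqrt (δ * N) := Real.sqrt_pos.2 (by positivity)
  set s : ℝ := δ * Real.sqrt (δ * N) with hs_def
  have hs : 0 < s := by positivity
  set bd : ℝ := (δ * N * Real.sqrt (δ * N))⁻¹ with hbd_def
  have hbd0 : 0 ≤ bd := by positivity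
  set p : Fin N → ℝ := fun j => max (v j - w j) 0 with hp_def
  set q : Fin N → ℝ := fun j => max (w j - v j) 0 with hq_def
  have hp0 : ∀ j, 0 ≤ p j := fun j => le_max_right _ _
  have hq0 : ∀ j, 0 ≤ q j := fun j => le_max_right _ _
  have hpq : ∀ j, p j - q j = v j - w j := by
    intro j
    rcases le_total (v j) (w j) with h | h
    · simp [hp_def, hq_def, max_eq_left, max_eq_right, sub_nonneg.2 h, sub_nonpos.2 h]
    · simp [hp_def, hq_def, max_eq_left, max_eq_right, sub_nonneg.2 h, sub_nonpos.2 h]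
  have habs : ∀ j, p j + q j = |v j - w j| := by
    intro j
    rcases le_total (v j) (w j) with h | h
    · rw [abs_of_nonpos (sub_nonpos.2 h)]
      simp [hp_def, hq_def, max_eq_left, max_eq_right, sub_nonneg.2 h, sub_nonpos.2 h]
    · rw [abs_of_nonneg (sub_nonneg.2 h)]
      simp [hp_def, hq_def, max_eq_left, max_eq_right, sub_nonneg.2 h, sub_nonpos.2 h]
  set D : ℝ := ∑ j, |v j - w j| with hD_def
  have hsum0 : ∑ j, (p j - q j) = 0 := by
    rw [Finset.sum_congr rfl (fun j _ => hpq j), Finset.sum_sub_distrib, hv1, hw1]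
    ring
  have hsumpq : ∑ j, (p j + q j) = D := by
    rw [hD_def]; exact Finset.sum_congr rfl (fun j _ => habs j)
  have hsub : ∑ j, p j - ∑ j, q j = 0 := by rw [← Finset.sum_sub_distrib]; exact hsum0
  have hadd : ∑ j, p j + ∑ j, q j = D := by rw [← Finset.sum_add_distrib]; exact hsumpq
  have hPsum : ∑ j, p j = D / 2 := by linarith
  have hQsum : ∑ j, q j = D / 2 := by linarith
  set A : Fin N → ℝ := fun m => ∑ j, p j * T j m with hA_def
  set B : Fin N → ℝ := fun m => ∑ j, q j * T j m with hB_def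
  have hAbd : ∀ m, A m ≤ D / 2 * bd := by
    intro m
    calc A m ≤ ∑ j, p j * bd :=
          Finset.sum_le_sum fun j _ => mul_le_mul_of_nonneg_left (hTbd j m) (hp0 j)
      _ = D / 2 * bd := by rw [← Finset.sum_mul, hPsum]
  have hBbd : ∀ m, B m ≤ D / 2 * bd := by
    intro m
    calc B m ≤ ∑ j, q j * bd :=
          Finset.sum_le_sum fun j _ => mul_le_mul_of_nonneg_left (hTbd j m) (hq0 j)
      _ = D / 2 * bd := by rw [← Finset.sum_mul, hQsum]
  have hvwAB : ∀ m, (∑ j, v j * T j m) - ∑ j, w j * T j m = A m - B m := by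
    intro m
    rw [hA_def, hB_def]
    simp only [← Finset.sum_sub_distrib]
    refine Finset.sum_congr rfl fun j _ => ?_
    rw [← sub_mul, ← sub_mul, hpq j]
  have hkey : ∀ m, |A m - B m| ≤ D * bd - A m - B m := by
    intro m
    rw [abs_sub_le_iff]
    constructor
    · have := hAbd m; linarith
    · have := hBbd m; linarith
  have hAsum : ∑ m, A m = D / 2 := by
    rw [hA_def, Finset.sum_comm]
    calc ∑ j, ∑ m, p j * T j m = ∑ j, p j * ∑ m, T j m := by
          refine Finset.sum_congr rfl fun j _ => ?_; rw [Finset.mul_sum]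
      _ = D / 2 := by simp only [hTrow, mul_one]; exact hPsum
  have hBsum : ∑ m, B m = D / 2 := by
    rw [hB_def, Finset.sum_comm]
    calc ∑ j, ∑ m, q j * T j m = ∑ j, q j * ∑ m, T j m := by
          refine Finset.sum_congr rfl fun j _ => ?_; rw [Finset.mul_sum]
      _ = D / 2 := by simp only [hTrow, mul_one]; exact hQsum
  have hNbd : (N : ℝ) * bd = s⁻¹ := by
    rw [hbd_def, hs_def]
    rw [show δ * N * Real.sqrt (δ * N) = N * (δ * Real.sqrt (δ * N)) by ring]
    rw [mul_inv]
    field_simp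
  calc ∑ m, |(∑ j, v j * T j m) - ∑ j, w j * T j m|
      = ∑ m, |A m - B m| := Finset.sum_congr rfl fun m _ => by rw [hvwAB m]
    _ ≤ ∑ m, (D * bd - A m - B m) := Finset.sum_le_sum fun m _ => hkey m
    _ = (N : ℝ) * (D * bd) - ∑ m, A m - ∑ m, B m := by
        rw [Finset.sum_sub_distrib, Finset.sum_sub_distrib, Finset.sum_const,
          Finset.card_univ, Fintype.card_fin, nsmul_eq_mul]
    _ = (s⁻¹ - 1) * D := by
        rw [hAsum, hBsum]
        have : (N : ℝ) * (D * bd) = ((N : ℝ) * bd) * D := by ring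
        rw [this, hNbd]; ring
end

section
/- Under the contraction of the previous setup, for every n ≥ 1 and all indices k, l: ∑_m |(T^n)_{km} − (T^n)_{lm}| ≤ ((δ^{3/2}√N)^{-1} − 1)^{n−1} · ∑_j |T_{kj} − T_{lj}|. -/
open Finset

private lemma max_sub_max_neg (x : ℝ) : max x 0 - max (-x) 0 = x := by
  rcases le_total x 0 with h | h
  · rw [max_eq_right h, max_eq_left (by linarith)]; ring
  · rw [max_eq_left h, max_eq_right (by linarith)]; ring

private lemma abs_eq_two_max (x : ℝ) : |x| = 2 * max x 0 - x := by
  rcases le_total x 0 with h | h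
  · rw [abs_of_nonpos h, max_eq_right h]; ring
  · rw [abs_of_nonneg h, max_eq_left h]; ring

private lemma abs_eq_max_add (x : ℝ) : |x| = max x 0 + max (-x) 0 := by
  rcases le_total x 0 with h | h
  · rw [abs_of_nonpos h, max_eq_right h, max_eq_left (by linarith)]; ring
  · rw [abs_of_nonneg h, max_eq_left h, max_eq_right (by linarith)]; ring

private lemma one_step (N : ℕ) (a : ℝ)
    (T : Matrix (Fin N) (Fin N) ℝ)
    (hTpos : ∀ j m, 0 ≤ T j m) (hTrow : ∀ j, ∑ m, T j m = 1)
    (hTbd : ∀ j m, T j m ≤ a)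
    (d : Fin N → ℝ) (hd : ∑ j, d j = 0) :
    ∑ m, |∑ j, d j * T j m| ≤ ((N : ℝ) * a - 1) * ∑ j, |d j| := by
  set S : ℝ := ∑ j, max (d j) 0 with hS
  have hSneg : ∑ j, max (-(d j)) 0 = S := by
    have h1 : ∑ j, (max (d j) 0 - max (-(d j)) 0) = 0 := by
      simp only [max_sub_max_neg]; exact hd
    rw [Finset.sum_sub_distrib] at h1
    linarith
  have hfsum : ∑ m, (∑ j, d j * T j m) = 0 := by
    rw [Finset.sum_comm]
    have : ∀ j, ∑ m, d j * T j m = d j := by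
      intro j; rw [← Finset.mul_sum, hTrow j, mul_one]
    simp only [this]; exact hd
  have key : ∀ m, max (∑ j, d j * T j m) 0 ≤ S * a - ∑ j, max (-(d j)) 0 * T j m := by
    intro m
    have hpos_le : ∀ (g : Fin N → ℝ), (∀ j, 0 ≤ g j) → (∑ j, g j) = S →
        ∑ j, g j * T j m ≤ S * a := by
      intro g hg hgs
      calc ∑ j, g j * T j m ≤ ∑ j, g j * a := by
            apply Finset.sum_le_sum; intro j _
            exact mul_le_mul_of_nonneg_left (hTbd j m) (hg j)
        _ = S * a := by rw [← Finset.sum_mul, hgs]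
    have h1 : ∑ j, max (d j) 0 * T j m ≤ S * a :=
      hpos_le _ (fun j => le_max_right _ _) rfl
    have h2 : ∑ j, max (-(d j)) 0 * T j m ≤ S * a :=
      hpos_le _ (fun j => le_max_right _ _) hSneg
    have hdecomp : ∑ j, d j * T j m
        = ∑ j, max (d j) 0 * T j m - ∑ j, max (-(d j)) 0 * T j m := by
      rw [← Finset.sum_sub_distrib]
      congr 1; ext j; rw [← sub_mul, max_sub_max_neg]
    apply max_le
    · rw [hdecomp]; linarith
    · linarith
  have hsummax : ∑ m, max (∑ j, d j * T j m) 0 ≤ (N : ℝ) * S * a - S := by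
    calc ∑ m, max (∑ j, d j * T j m) 0
        ≤ ∑ m : Fin N, (S * a - ∑ j, max (-(d j)) 0 * T j m) :=
          Finset.sum_le_sum (fun m _ => key m)
      _ = (N : ℝ) * S * a - S := by
          rw [Finset.sum_sub_distrib, Finset.sum_const, Finset.sum_comm]
          have : ∀ j, ∑ m, max (-(d j)) 0 * T j m = max (-(d j)) 0 := by
            intro j; rw [← Finset.mul_sum, hTrow j, mul_one]
          simp only [this, hSneg, card_univ, Fintype.card_fin, nsmul_eq_mul]
          ring
  have habsd : ∑ j, |d j| = 2 * S := by
    calc ∑ j, |d j| = ∑ j, (max (d j) 0 + max (-(d j)) 0) := by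
          congr 1; ext j; exact abs_eq_max_add _
      _ = 2 * S := by rw [Finset.sum_add_distrib, hSneg]; ring
  calc ∑ m, |∑ j, d j * T j m|
      = 2 * (∑ m, max (∑ j, d j * T j m) 0) - ∑ m, (∑ j, d j * T j m) := by
        rw [Finset.mul_sum, ← Finset.sum_sub_distrib]
        congr 1; ext m; exact abs_eq_two_max _
    _ ≤ 2 * ((N : ℝ) * S * a - S) - 0 := by
        rw [hfsum]; gcongr
    _ = ((N : ℝ) * a - 1) * ∑ j, |d j| := by rw [habsd]; ring

/-- Iterated contraction: for every `n ≥ 1` and all indices `k, l`,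
`∑_m |(Tⁿ)_{km} - (Tⁿ)_{lm}| ≤ ((δ^{3/2}√N)⁻¹ - 1)^{n-1}·∑_j |T_{kj} - T_{lj}|`. -/
theorem markov_matrix_power_contraction (N : ℕ) (hN : 1 ≤ N) (δ : ℝ)
    (hδ0 : 0 < δ) (hδ1 : δ < 1)
    (hδN : δ * Real.sqrt (δ * N) < 1) (hδN' : 1 / 2 < δ * Real.sqrt (δ * N))
    (T : Matrix (Fin N) (Fin N) ℝ)
    (hTpos : ∀ j m, 0 ≤ T j m) (hTrow : ∀ j, ∑ m, T j m = 1)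
    (hTbd : ∀ j m, T j m ≤ (δ * N * Real.sqrt (δ * N))⁻¹) :
    ∀ n : ℕ, 1 ≤ n → ∀ k l : Fin N,
      ∑ m, |(T ^ n) k m - (T ^ n) l m|
        ≤ ((δ * Real.sqrt (δ * N))⁻¹ - 1) ^ (n - 1) * ∑ j, |T k j - T l j| := by
  set s := Real.sqrt (δ * N) with hs
  have hs0 : 0 < s := by
    apply Real.sqrt_pos.mpr
    positivity
  have hN0 : (0 : ℝ) < N := by exact_mod_cast hN
  set c : ℝ := (δ * s)⁻¹ - 1 with hc
  have hds0 : 0 < δ * s := by positivity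
  have hc0 : 0 ≤ c := by
    have h1 : 1 ≤ (δ * s)⁻¹ := (one_le_inv₀ hds0).mpr hδN.le
    rw [hc]; linarith
  have hNa : (N : ℝ) * (δ * N * s)⁻¹ - 1 = c := by
    rw [hc]
    congr 1
    field_simp
  -- row sums of powers
  have hrow : ∀ n : ℕ, ∀ k : Fin N, ∑ m, (T ^ n) k m = 1 := by
    intro n
    induction n with
    | zero => intro k; simp [Matrix.one_apply]
    | succ n ih =>
      intro k
      rw [pow_succ]
      simp only [Matrix.mul_apply]
      rw [Finset.sum_comm]
      have : ∀ j, ∑ m, (T ^ n) k j * T j m = (T ^ n) k j := by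
        intro j; rw [← Finset.mul_sum, hTrow j, mul_one]
      simp only [this]; exact ih k
  intro n hn
  induction n, hn using Nat.le_induction with
  | base =>
    intro k l
    simp only [pow_one, Nat.sub_self, pow_zero, one_mul]
    exact le_rfl
  | succ n hn ih =>
    intro k l
    have hd : ∑ j, ((T ^ n) k j - (T ^ n) l j) = 0 := by
      rw [Finset.sum_sub_distrib, hrow n k, hrow n l, sub_self]
    have hentry : ∀ m, (T ^ (n + 1)) k m - (T ^ (n + 1)) l m
        = ∑ j, ((T ^ n) k j - (T ^ n) l j) * T j m := by
      intro m
      rw [pow_succ]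
      simp only [Matrix.mul_apply]
      rw [← Finset.sum_sub_distrib]
      congr 1; ext j; ring
    calc ∑ m, |(T ^ (n + 1)) k m - (T ^ (n + 1)) l m|
        = ∑ m, |∑ j, ((T ^ n) k j - (T ^ n) l j) * T j m| := by
          congr 1; ext m; rw [hentry m]
      _ ≤ ((N : ℝ) * (δ * N * s)⁻¹ - 1) * ∑ j, |(T ^ n) k j - (T ^ n) l j| :=
          one_step N _ T hTpos hTrow hTbd _ hd
      _ = c * ∑ j, |(T ^ n) k j - (T ^ n) l j| := by rw [hNa]
      _ ≤ c * (c ^ (n - 1) * ∑ j, |T k j - T l j|) := by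
          exact mul_le_mul_of_nonneg_left (ih k l) hc0
      _ = c ^ (n + 1 - 1) * ∑ j, |T k j - T l j| := by
          rw [← mul_assoc, ← pow_succ', Nat.sub_add_cancel hn]
          simp
end

section
/- Let T be as in the contraction setup with 1/2 < δ^{3/2}√N (so q := (δ^{3/2}√N)^{-1} − 1 ∈ [0,1)). If h ∈ ℝ^N satisfies ‖h‖_∞ ≤ H, then for all k, l: |∑_{n=0}^∞ ((T^n h)_k − (T^n h)_l)| ≤ 2H + H·(∑_j |T_{kj} − T_{lj}|)·(2 − (δ^{3/2}√N)^{-1})^{-1}, where the series converges absolutely. -/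
set_option maxHeartbeats 800000

private lemma sum_dev_bound {N : ℕ} (hN : 1 ≤ N) (d g : Fin N → ℝ)
    (hd : ∑ j, d j = 0) (C : ℝ) (hC : ∀ j m, g j - g m ≤ C) :
    |∑ j, d j * g j| ≤ (∑ j, |d j|) * (C / 2) := by
  haveI : NeZero N := ⟨by omega⟩
  have hne : (Finset.univ : Finset (Fin N)).Nonempty := Finset.univ_nonempty
  set M := Finset.univ.sup' hne g with hM
  set m := Finset.univ.inf' hne g with hm
  obtain ⟨jM, _, hjM⟩ := Finset.exists_mem_eq_sup' hne g
  obtain ⟨jm, _, hjm⟩ := Finset.exists_mem_eq_inf' hne g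
  have hMm : M - m ≤ C := by rw [hM, hm, hjM, hjm]; exact hC jM jm
  set c := (M + m) / 2 with hc
  have hdev : ∀ j, |g j - c| ≤ C / 2 := by
    intro j
    have h1 : g j ≤ M := Finset.le_sup' g (Finset.mem_univ j)
    have h2 : m ≤ g j := Finset.inf'_le g (Finset.mem_univ j)
    rw [abs_le]; constructor <;> [linarith; linarith]
  have heq : ∑ j, d j * g j = ∑ j, d j * (g j - c) := by
    simp [mul_sub, Finset.sum_sub_distrib, ← Finset.sum_mul, hd]
  rw [heq]
  calc |∑ j, d j * (g j - c)| ≤ ∑ j, |d j * (g j - c)| := Finset.abs_sum_le_sum_abs _ _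
    _ ≤ ∑ j, |d j| * (C / 2) := by
        refine Finset.sum_le_sum fun j _ => ?_
        rw [abs_mul]
        exact mul_le_mul_of_nonneg_left (hdev j) (abs_nonneg _)
    _ = (∑ j, |d j|) * (C / 2) := by rw [Finset.sum_mul]

/-- Neumann series bound: with `q = (δ^{3/2}√N)⁻¹ - 1 ∈ [0,1)` and `‖h‖_∞ ≤ H`,
the series `∑_n ((Tⁿh)_k - (Tⁿh)_l)` converges absolutely and
`|∑_{n=0}^∞ ((Tⁿh)_k - (Tⁿh)_l)| ≤ 2H + H·(∑_j |T_{kj} - T_{lj}|)·(2 - (δ^{3/2}√N)⁻¹)⁻¹`. -/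
theorem neumann_series_bound (N : ℕ) (hN : 1 ≤ N) (δ H : ℝ)
    (hδ0 : 0 < δ) (hδ1 : δ < 1)
    (hδN : δ * Real.sqrt (δ * N) < 1) (hδN' : 1 / 2 < δ * Real.sqrt (δ * N))
    (T : Matrix (Fin N) (Fin N) ℝ)
    (hTpos : ∀ j m, 0 ≤ T j m) (hTrow : ∀ j, ∑ m, T j m = 1)
    (hTbd : ∀ j m, T j m ≤ (δ * N * Real.sqrt (δ * N))⁻¹)
    (h : Fin N → ℝ) (hH : ∀ m, |h m| ≤ H) :
    ∀ k l : Fin N,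
      Summable (fun n : ℕ => |(T ^ n).mulVec h k - (T ^ n).mulVec h l|)
      ∧ |∑' n : ℕ, ((T ^ n).mulVec h k - (T ^ n).mulVec h l)|
          ≤ 2 * H + H * (∑ j, |T k j - T l j|) * (2 - (δ * Real.sqrt (δ * N))⁻¹)⁻¹ := by
  have hNpos : (0:ℝ) < N := by exact_mod_cast hN
  set a := δ * Real.sqrt (δ * N) with ha
  have ha0 : 0 < a := lt_trans (by norm_num) hδN'
  set q : ℝ := a⁻¹ - 1 with hqdef
  have hainvpos : 0 < a⁻¹ := inv_pos.mpr ha0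
  have hmulinv : a * a⁻¹ = 1 := mul_inv_cancel₀ ha0.ne'
  have hainv1 : 1 ≤ a⁻¹ := by nlinarith
  have hainv2 : a⁻¹ < 2 := by nlinarith
  have hq0 : 0 ≤ q := by simp [hqdef]; linarith
  have hq1 : q < 1 := by simp [hqdef]; linarith
  have hH0 : 0 ≤ H := le_trans (abs_nonneg _) (hH ⟨0, by omega⟩)
  -- entry bound rewritten
  have hc : ∀ j m, T j m ≤ (N * a)⁻¹ := by
    intro j m
    have := hTbd j m
    have e : δ * N * Real.sqrt (δ * N) = N * a := by rw [ha]; ring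
    rwa [e] at this
  -- TV bound : ∑ |T k j - T l j| ≤ 2q
  have hS : ∀ k l : Fin N, ∑ j, |T k j - T l j| ≤ 2 * q := by
    intro k l
    have step1 : ∑ j, |T k j - T l j| ≤ ∑ j, (2 * (N * a)⁻¹ - T k j - T l j) := by
      refine Finset.sum_le_sum fun j _ => ?_
      have h1 := hc k j; have h2 := hc l j
      have h3 := hTpos k j; have h4 := hTpos l j
      rw [abs_le]; constructor <;> [linarith; linarith]
    have step2 : ∑ j, (2 * (N * a)⁻¹ - T k j - T l j) = 2 * q := by
      have : ∑ j, (2 * (N * a)⁻¹ - T k j - T l j)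
          = (N : ℝ) * (2 * (N * a)⁻¹) - 1 - 1 := by
        simp [Finset.sum_sub_distrib, hTrow k, hTrow l, Finset.sum_const,
          Finset.card_univ, nsmul_eq_mul]
      rw [this, hqdef]
      field_simp
      ring
    exact le_of_le_of_eq step1 step2
  -- oscillation contraction
  have key : ∀ n : ℕ, ∀ k l : Fin N,
      |(T ^ n).mulVec h k - (T ^ n).mulVec h l| ≤ 2 * H * q ^ n := by
    intro n
    induction n with
    | zero =>
      intro k l
      simp only [pow_zero, Matrix.one_mulVec]
      have := hH k; have := hH l
      have habs : |h k - h l| ≤ |h k| + |h l| := abs_sub _ _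
      simp only [pow_zero, mul_one]
      linarith
    | succ n ih =>
      intro k l
      rw [pow_succ', ← Matrix.mulVec_mulVec]
      set g := (T ^ n).mulVec h with hg
      have heq : T.mulVec g k - T.mulVec g l = ∑ j, (T k j - T l j) * g j := by
        simp [Matrix.mulVec, dotProduct, sub_mul, Finset.sum_sub_distrib]
      rw [heq]
      have hd : ∑ j, (T k j - T l j) = 0 := by
        simp [Finset.sum_sub_distrib, hTrow k, hTrow l]
      have hC : ∀ j m, g j - g m ≤ 2 * H * q ^ n := fun j m =>
        (le_abs_self _).trans (ih j m)
      have := sum_dev_bound hN (fun j => T k j - T l j) g hd (2 * H * q ^ n) hC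
      refine this.trans ?_
      have hqn0 : 0 ≤ H * q ^ n := mul_nonneg hH0 (pow_nonneg hq0 n)
      calc (∑ j, |T k j - T l j|) * (2 * H * q ^ n / 2)
          = (∑ j, |T k j - T l j|) * (H * q ^ n) := by ring
        _ ≤ 2 * q * (H * q ^ n) := mul_le_mul_of_nonneg_right (hS k l) hqn0
        _ = 2 * H * q ^ (n + 1) := by ring
  -- tail bound
  have tail : ∀ (n : ℕ) (k l : Fin N),
      |(T ^ (n + 1)).mulVec h k - (T ^ (n + 1)).mulVec h l|
        ≤ (∑ j, |T k j - T l j|) * (H * q ^ n) := by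
    intro n k l
    rw [pow_succ', ← Matrix.mulVec_mulVec]
    set g := (T ^ n).mulVec h with hg
    have heq : T.mulVec g k - T.mulVec g l = ∑ j, (T k j - T l j) * g j := by
      simp [Matrix.mulVec, dotProduct, sub_mul, Finset.sum_sub_distrib]
    rw [heq]
    have hd : ∑ j, (T k j - T l j) = 0 := by
      simp [Finset.sum_sub_distrib, hTrow k, hTrow l]
    have hC : ∀ j m, g j - g m ≤ 2 * H * q ^ n := fun j m =>
      (le_abs_self _).trans (key n j m)
    have := sum_dev_bound hN (fun j => T k j - T l j) g hd (2 * H * q ^ n) hC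
    refine this.trans (le_of_eq ?_)
    ring
  intro k l
  set D : ℕ → ℝ := fun n => (T ^ n).mulVec h k - (T ^ n).mulVec h l with hD
  have hgeom : Summable fun n : ℕ => q ^ n := summable_geometric_of_lt_one hq0 hq1
  have hsum_abs : Summable fun n : ℕ => |D n| := by
    refine Summable.of_nonneg_of_le (fun n => abs_nonneg _) (fun n => key n k l) ?_
    exact hgeom.mul_left (2 * H)
  refine ⟨hsum_abs, ?_⟩
  have hsum : Summable D := hsum_abs.of_abs
  rw [Summable.tsum_eq_zero_add hsum]
  set S := ∑ j, |T k j - T l j| with hSdef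
  have hS0 : 0 ≤ S := Finset.sum_nonneg fun j _ => abs_nonneg _
  have htail_sum : Summable fun n : ℕ => |D (n + 1)| :=
    (summable_nat_add_iff 1).mpr hsum_abs
  have h1 : |∑' n : ℕ, D (n + 1)| ≤ ∑' n : ℕ, |D (n + 1)| := by
    rw [← Real.norm_eq_abs]
    exact (norm_tsum_le_tsum_norm (by simpa [Real.norm_eq_abs] using htail_sum)).trans
      (le_of_eq (by simp [Real.norm_eq_abs]))
  have h2 : ∑' n : ℕ, |D (n + 1)| ≤ ∑' n : ℕ, S * H * q ^ n := by
    refine Summable.tsum_le_tsum (fun n => ?_) htail_sum (hgeom.mul_left (S * H))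
    have := tail n k l
    calc |D (n + 1)| ≤ S * (H * q ^ n) := this
      _ = S * H * q ^ n := by ring
  have h3 : ∑' n : ℕ, S * H * q ^ n = S * H * (1 - q)⁻¹ := by
    rw [tsum_mul_left, tsum_geometric_of_lt_one hq0 hq1]
  have h0 : |D 0| ≤ 2 * H := by
    have := hH k; have := hH l
    have habs : |h k - h l| ≤ |h k| + |h l| := abs_sub _ _
    simp only [hD, pow_zero, Matrix.one_mulVec]
    linarith
  have hfinal : |D 0 + ∑' n : ℕ, D (n + 1)| ≤ |D 0| + |∑' n : ℕ, D (n + 1)| :=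
    abs_add_le _ _
  have hq' : (1 : ℝ) - q = 2 - a⁻¹ := by rw [hqdef]; ring
  have : |D 0 + ∑' n : ℕ, D (n + 1)| ≤ 2 * H + S * H * (1 - q)⁻¹ := by linarith
  rw [hq'] at this
  calc |D 0 + ∑' n : ℕ, D (n + 1)| ≤ 2 * H + S * H * (2 - a⁻¹)⁻¹ := this
    _ = 2 * H + H * S * (2 - a⁻¹)⁻¹ := by ring
end
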